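/- If a compact Hausdorff space K admits a continuous surjection h : K → M onto a metrizable compact space with all fibers of cardinality at most n, then there exists a countable family F of open Fσ-subsets of K such that for every x_0, ..., x_n in K there exist V_0, ..., V_n in F with x_i ∈ V_i and V_0 ∩ ... ∩ V_n = ∅. Conversely, the existence of such a family F implies the existence of such a surjection h. -/

import Mathlib

open Filter Topology

universe u


lemma aux_mk_le {K : Type u} (s : Set K) (n : ℕ)
    (h : ∀ x : Fin (n+1) → K, Function.Injective x → ¬ (∀ i, x i ∈ s)) :
    Cardinal.mk s ≤ (n : Cardinal) := by
  by_contra hlt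
  push_neg at hlt
  have h1 : ((n+1 : ℕ) : Cardinal) ≤ Cardinal.mk s := by
    push_cast
    exact Cardinal.natCast_add_one_le_iff.2 hlt
  have h2 : Cardinal.mk (ULift.{u} (Fin (n+1))) ≤ Cardinal.mk s := by
    simpa [Cardinal.mk_uLift, Cardinal.mk_fin] using h1
  obtain ⟨e⟩ := Cardinal.le_def _ _ |>.1 h2
  have hinj : Function.Injective (fun i : Fin (n+1) => ((e ⟨i⟩ : s) : K)) := by
    intro a b hab
    have := e.injective (Subtype.ext hab)
    exact congrArg ULift.down this
  exact h _ hinj (fun i => (e ⟨i⟩).2)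

lemma aux_no_tuple {K : Type u} {s : Set K} {n : ℕ} (hc : Cardinal.mk s ≤ (n : Cardinal))
    {x : Fin (n+1) → K} (hx : Function.Injective x) (hmem : ∀ i, x i ∈ s) : False := by
  have e : ULift.{u} (Fin (n+1)) ↪ s :=
    ⟨fun i => ⟨x i.down, hmem _⟩, by
      intro a b hab
      cases a; cases b
      simpa using hx (congrArg Subtype.val hab)⟩
  have h2 : Cardinal.mk (ULift.{u} (Fin (n+1))) ≤ Cardinal.mk s := (Cardinal.le_def _ _).2 ⟨e⟩
  have h3 : ((n + 1 : ℕ) : Cardinal) ≤ (n : Cardinal) := by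
    refine le_trans ?_ (h2.trans hc)
    simp [Cardinal.mk_uLift, Cardinal.mk_fin]
  have : (n + 1 : ℕ) ≤ n := by exact_mod_cast h3
  omega

/-- `K` is a premetric compactum of degree at most `n`: there is a continuous surjection
onto a compact metrizable space with all fibers of cardinality at most `n`. -/
def PremetricLE (K : Type u) [TopologicalSpace K] (n : ℕ) : Prop :=
  ∃ (M : Type u) (tM : TopologicalSpace M) (h : K → M),
    @CompactSpace M tM ∧ @TopologicalSpace.MetrizableSpace M tM ∧
    @Continuous K M _ tM h ∧ Function.Surjective h ∧
    ∀ x : M, Cardinal.mk (h ⁻¹' {x}) ≤ (n : Cardinal)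

/-- A compact Hausdorff space `K` is a premetric compactum of degree at most `n` if and
only if there is a countable family `F` of open `Fσ` subsets of `K` such that any `n+1`
pairwise distinct points can be covered by members of `F` with empty total intersection. -/
theorem premetric_iff_open_Fsigma_family (K : Type u) [TopologicalSpace K] [CompactSpace K]
    [T2Space K] (n : ℕ) :
    PremetricLE K n ↔
      ∃ F : Set (Set K), F.Countable ∧
        (∀ V ∈ F, IsOpen V ∧ ∃ C : ℕ → Set K, (∀ i, IsClosed (C i)) ∧ V = ⋃ i, C i) ∧
        ∀ x : Fin (n + 1) → K, Function.Injective x →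
          ∃ V : Fin (n + 1) → Set K, (∀ i, V i ∈ F ∧ x i ∈ V i) ∧ (⋂ i, V i) = ∅ := by
  constructor
  · rintro ⟨M, tM, h, hcomp, hmet, hcont, hsurj, hcard⟩
    letI := tM
    haveI := hcomp
    haveI := hmet
    letI : MetricSpace M := TopologicalSpace.metrizableSpaceMetric M
    haveI : SecondCountableTopology M := inferInstance
    refine ⟨(fun U => h ⁻¹' U) '' TopologicalSpace.countableBasis M ∪ {Set.univ}, ?_, ?_, ?_⟩
    · exact ((TopologicalSpace.countable_countableBasis M).image _).union (Set.countable_singleton _)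
    · rintro V (⟨U, hU, rfl⟩ | hV)
      · have hUopen : IsOpen U := TopologicalSpace.isOpen_of_mem_countableBasis hU
        refine ⟨hUopen.preimage hcont, ?_⟩
        obtain ⟨f, hfopen, hfeq⟩ := (hUopen.isClosed_compl.isGδ).eq_iInter_nat
        refine ⟨fun i => h ⁻¹' (f i)ᶜ, fun i => ((hfopen i).isClosed_compl).preimage hcont, ?_⟩
        rw [← Set.preimage_iUnion]
        rw [← compl_compl U, hfeq, Set.compl_iInter]
      · rw [Set.mem_singleton_iff] at hV
        subst hV
        exact ⟨isOpen_univ, fun _ => Set.univ, fun _ => isClosed_univ, (Set.iUnion_const _).symm⟩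
    · intro x hx
      -- images are not all equal
      have hne : ∃ i : Fin (n+1), h (x i) ≠ h (x 0) := by
        by_contra hc
        push_neg at hc
        exact aux_no_tuple (hcard (h (x 0))) hx (fun i => by simp [hc i])
      obtain ⟨i, hi⟩ := hne
      obtain ⟨U1, U2, hU1o, hU2o, hm1, hm2, hdisj⟩ := t2_separation hi
      obtain ⟨B1, hB1, hmB1, hB1U⟩ := (TopologicalSpace.isBasis_countableBasis M).exists_subset_of_mem_open hm1 hU1o
      obtain ⟨B2, hB2, hmB2, hB2U⟩ := (TopologicalSpace.isBasis_countableBasis M).exists_subset_of_mem_open hm2 hU2o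
      have hi0 : i ≠ 0 := by
        intro hh; rw [hh] at hi; exact hi rfl
      classical
      refine ⟨fun k => if k = i then h ⁻¹' B1 else if k = 0 then h ⁻¹' B2 else Set.univ, ?_, ?_⟩
      · intro k
        by_cases hk : k = i
        · subst hk
          simp only [if_pos rfl]
          exact ⟨Or.inl ⟨B1, hB1, rfl⟩, hmB1⟩
        · by_cases hk0 : k = 0
          · subst hk0
            simp only [if_neg hk, if_pos rfl]
            exact ⟨Or.inl ⟨B2, hB2, rfl⟩, hmB2⟩
          · simp only [if_neg hk, if_neg hk0]
            exact ⟨Or.inr rfl, Set.mem_univ _⟩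
      · apply Set.eq_empty_iff_forall_notMem.2
        intro z hz
        have h1 : z ∈ h ⁻¹' B1 := by
          have := Set.mem_iInter.1 hz i
          simpa using this
        have h2 : z ∈ h ⁻¹' B2 := by
          have := Set.mem_iInter.1 hz 0
          simpa [hi0.symm, if_neg (Ne.symm hi0)] using this
        exact hdisj.le_bot ⟨hB1U h1, hB2U h2⟩
  · rintro ⟨F, hFc, hF2, hF3⟩
    classical
    haveI : Countable ↥F := hFc.to_subtype
    -- choose Fσ decompositions
    have hC : ∀ p : ↥F, ∃ C : ℕ → Set K, (∀ i, IsClosed (C i)) ∧ (p : Set K) = ⋃ i, C i :=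
      fun p => (hF2 p.1 p.2).2
    choose C hCclosed hCeq using hC
    -- Urysohn functions
    have hg : ∀ p : ↥F, ∀ i : ℕ, ∃ g : C(K, ℝ),
        Set.EqOn g 0 ((p : Set K)ᶜ) ∧ Set.EqOn g 1 (C p i) ∧ ∀ x, g x ∈ Set.Icc (0:ℝ) 1 := by
      intro p i
      apply exists_continuous_zero_one_of_isClosed
        (isClosed_compl_iff.2 (hF2 p.1 p.2).1) (hCclosed p i)
      rw [Set.disjoint_compl_left_iff_subset]
      rw [hCeq p]
      exact Set.subset_iUnion _ i
    choose g hg0 hg1 _hg01 using hg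
    set h : K → (↥F × ℕ → ℝ) := fun x q => g q.1 q.2 x with hh
    have hcont : Continuous h := continuous_pi fun q => (g q.1 q.2).continuous
    refine ⟨↥(Set.range h), inferInstance, Set.rangeFactorization h, ?_, ?_, ?_, ?_, ?_⟩
    · exact isCompact_iff_compactSpace.1 (isCompact_range hcont)
    · infer_instance
    · exact hcont.subtype_mk _
    · exact Set.rangeFactorization_surjective
    · intro m
      apply aux_mk_le
      intro x hx hmem
      obtain ⟨V, hV1, hV2⟩ := hF3 x hx
      -- all x j belong to each V i
      have key : ∀ i j : Fin (n+1), x j ∈ V i := by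
        intro i j
        have hVF : V i ∈ F := (hV1 i).1
        have hxi : x i ∈ V i := (hV1 i).2
        set p : ↥F := ⟨V i, hVF⟩ with hp
        have hxi' : x i ∈ ⋃ k, C p k := by rw [← hCeq p]; exact hxi
        obtain ⟨k, hk⟩ := Set.mem_iUnion.1 hxi'
        have h1 : g p k (x i) = 1 := hg1 p k hk
        have heq : h (x i) = h (x j) := by
          have h1' : Set.rangeFactorization h (x i) = m := hmem i
          have h2' : Set.rangeFactorization h (x j) = m := hmem j
          have := h1'.trans h2'.symm
          exact congrArg Subtype.val this
        have h2 : g p k (x j) = 1 := by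
          have := congrFun heq (p, k)
          simpa [hh, h1] using this.symm
        by_contra hxj
        have : g p k (x j) = 0 := hg0 p k hxj
        rw [h2] at this
        norm_num at this
      have : x 0 ∈ ⋂ i, V i := Set.mem_iInter.2 fun i => key i 0
      rw [hV2] at this
      exact this
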